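/- Let W be an m×m complex Hermitian positive definite matrix and P, P_T > 0. If R* is a positive definite matrix in the joint constraint set S(P_T, P) that maximizes log det(I + W·R) over S(P_T, P), then the largest eigenvalue of the off-diagonal part of W⁻¹ satisfies λ_max(D̄(W⁻¹)) < P; equivalently, P·I − D̄(W⁻¹) is positive definite. Moreover, if m·P ≤ P_T, this condition is also sufficient for the existence of a positive definite maximizer, namely R* = P·I − D̄(W⁻¹). -/

import Mathlib

open Matrix ComplexOrder

noncomputable def mutualInfo {m : ℕ} (W R : Matrix (Fin m) (Fin m) ℂ) : ℝ :=
  Real.log ((1 + W * R).det.re)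

def jointSet (m : ℕ) (PT P : ℝ) : Set (Matrix (Fin m) (Fin m) ℂ) :=
  {R | R.PosSemidef ∧ R.trace.re ≤ PT ∧ ∀ i, (R i i).re ≤ P}

noncomputable def lamMin {m : ℕ} {W : Matrix (Fin m) (Fin m) ℂ} (hW : W.IsHermitian) : ℝ :=
  sInf (Set.range hW.eigenvalues)
/-- The off-diagonal part `D̄(A) = A − D(A)` of a matrix. -/
def offDiag {m : ℕ} (A : Matrix (Fin m) (Fin m) ℂ) : Matrix (Fin m) (Fin m) ℂ :=
  fun i j => if i = j then 0 else A i j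

/-- The largest eigenvalue of a Hermitian matrix. -/
noncomputable def lamMax {m : ℕ} {A : Matrix (Fin m) (Fin m) ℂ} (hA : A.IsHermitian) : ℝ :=
  sSup (Set.range hA.eigenvalues)


namespace Aux
variable {m : ℕ}

lemma dot_self_eq (x : Fin m → ℂ) :
    star x ⬝ᵥ x = ((∑ i, Complex.normSq (x i) : ℝ) : ℂ) := by
  rw [dotProduct]
  push_cast
  exact Finset.sum_congr rfl fun i _ => by
    simp [Complex.normSq_eq_conj_mul_self]

lemma quad_decomp {A : Matrix (Fin m) (Fin m) ℂ} (hA : A.IsHermitian) (x : Fin m → ℂ) :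
    ∃ y : Fin m → ℂ,
      star x ⬝ᵥ (A *ᵥ x) = ((∑ i, hA.eigenvalues i * Complex.normSq (y i) : ℝ) : ℂ) ∧
      star x ⬝ᵥ x = ((∑ i, Complex.normSq (y i) : ℝ) : ℂ) := by
  classical
  set U : Matrix (Fin m) (Fin m) ℂ := (hA.eigenvectorUnitary : Matrix (Fin m) (Fin m) ℂ) with hUdef
  have hU1 : U * star U = 1 := (Matrix.mem_unitaryGroup_iff).mp hA.eigenvectorUnitary.2
  have key : ∀ (c : Fin m → ℂ), star x ⬝ᵥ ((U * diagonal c * star U) *ᵥ x)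
      = ∑ i, c i * ((star U *ᵥ x) i * star ((star U *ᵥ x) i)) := by
    intro c
    set y := (star U) *ᵥ x with hy
    have hvm : star x ᵥ* U = star y := by
      rw [hy, star_mulVec, Matrix.star_eq_conjTranspose U, conjTranspose_conjTranspose]
    rw [← mulVec_mulVec, ← mulVec_mulVec, dotProduct_mulVec (star x) U, hvm, ← hy]
    simp [dotProduct, mulVec_diagonal, mul_comm, mul_left_comm, mul_assoc]
  refine ⟨(star U) *ᵥ x, ?_, ?_⟩
  · conv_lhs => rw [hA.spectral_theorem, Unitary.conjStarAlgAut_apply]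
    rw [← hUdef, key]
    push_cast
    exact Finset.sum_congr rfl fun i _ => by
      simp [Complex.mul_conj, Function.comp]
  · have h1 := key (fun _ => 1)
    rw [show (diagonal (fun _ : Fin m => (1:ℂ))) = 1 from diagonal_one, mul_one, hU1,
      one_mulVec] at h1
    rw [h1]
    push_cast
    exact Finset.sum_congr rfl fun i _ => by
      simp [Complex.mul_conj]

end Aux

namespace S2
open Aux
variable {m : ℕ} {A : Matrix (Fin m) (Fin m) ℂ}

lemma herm_im_zero (hA : A.IsHermitian) (x : Fin m → ℂ) :
    (star x ⬝ᵥ (A *ᵥ x)).im = 0 := by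
  obtain ⟨y, h1, _⟩ := quad_decomp hA x
  rw [h1, Complex.ofReal_im]

lemma dot_self_im (x : Fin m → ℂ) : (star x ⬝ᵥ x).im = 0 := by
  rw [dot_self_eq, Complex.ofReal_im]

lemma dot_self_re_nonneg (x : Fin m → ℂ) : 0 ≤ (star x ⬝ᵥ x).re := by
  rw [dot_self_eq, Complex.ofReal_re]
  exact Finset.sum_nonneg fun i _ => Complex.normSq_nonneg _

lemma dot_self_re_pos {x : Fin m → ℂ} (hx : x ≠ 0) : 0 < (star x ⬝ᵥ x).re := by
  rw [dot_self_eq, Complex.ofReal_re]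
  obtain ⟨i, hi⟩ := Function.ne_iff.mp hx
  exact Finset.sum_pos' (fun i _ => Complex.normSq_nonneg _)
    ⟨i, Finset.mem_univ i, by simpa using Complex.normSq_pos.mpr hi⟩

lemma le_lamMax (hA : A.IsHermitian) (i : Fin m) : hA.eigenvalues i ≤ lamMax hA :=
  le_csSup (Set.finite_range _).bddAbove (Set.mem_range_self i)

lemma lamMin_le (hA : A.IsHermitian) (i : Fin m) : lamMin hA ≤ hA.eigenvalues i :=
  csInf_le (Set.finite_range _).bddBelow (Set.mem_range_self i)

lemma re_le_lamMax (hA : A.IsHermitian) (x : Fin m → ℂ) :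
    (star x ⬝ᵥ (A *ᵥ x)).re ≤ lamMax hA * (star x ⬝ᵥ x).re := by
  obtain ⟨y, h1, h2⟩ := quad_decomp hA x
  rw [h1, h2, Complex.ofReal_re, Complex.ofReal_re, Finset.mul_sum]
  exact Finset.sum_le_sum fun i _ =>
    mul_le_mul_of_nonneg_right (le_lamMax hA i) (Complex.normSq_nonneg _)

lemma lamMin_le_re (hA : A.IsHermitian) (x : Fin m → ℂ) :
    lamMin hA * (star x ⬝ᵥ x).re ≤ (star x ⬝ᵥ (A *ᵥ x)).re := by
  obtain ⟨y, h1, h2⟩ := quad_decomp hA x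
  rw [h1, h2, Complex.ofReal_re, Complex.ofReal_re, Finset.mul_sum]
  exact Finset.sum_le_sum fun i _ =>
    mul_le_mul_of_nonneg_right (lamMin_le hA i) (Complex.normSq_nonneg _)

lemma exists_eq_lamMax [Nonempty (Fin m)] (hA : A.IsHermitian) :
    ∃ j, hA.eigenvalues j = lamMax hA :=
  (Set.Nonempty.csSup_mem (Set.range_nonempty _) (Set.finite_range _) : lamMax hA ∈ _)

lemma exists_eq_lamMin [Nonempty (Fin m)] (hA : A.IsHermitian) :
    ∃ j, hA.eigenvalues j = lamMin hA :=
  (Set.Nonempty.csInf_mem (Set.range_nonempty _) (Set.finite_range _) : lamMin hA ∈ _)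

lemma lamMin_pos [Nonempty (Fin m)] (hA : A.PosDef) : 0 < lamMin hA.1 := by
  obtain ⟨j, hj⟩ := exists_eq_lamMin hA.1
  rw [← hj]; exact hA.eigenvalues_pos j

lemma posDef_of_re (hA : A.IsHermitian)
    (h : ∀ x : Fin m → ℂ, x ≠ 0 → 0 < (star x ⬝ᵥ (A *ᵥ x)).re) : A.PosDef :=
  Matrix.PosDef.of_dotProduct_mulVec_pos hA fun ⦃x⦄ hx => Complex.lt_def.mpr ⟨by simpa using h x hx, by simp [herm_im_zero hA x]⟩

lemma posSemidef_of_re (hA : A.IsHermitian)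
    (h : ∀ x : Fin m → ℂ, 0 ≤ (star x ⬝ᵥ (A *ᵥ x)).re) : A.PosSemidef :=
  Matrix.PosSemidef.of_dotProduct_mulVec_nonneg hA fun x => Complex.le_def.mpr ⟨by simpa using h x, by simp [herm_im_zero hA x]⟩

lemma dot_single (i : Fin m) : star (Pi.single i 1 : Fin m → ℂ) ⬝ᵥ (A *ᵥ Pi.single i 1) = A i i := by
  classical
  simp [dotProduct, mulVec, Pi.single_apply, Finset.sum_ite_eq, apply_ite]

lemma herm_diag_im (hA : A.IsHermitian) (i : Fin m) : (A i i).im = 0 := by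
  have := congrFun (congrFun hA i) i
  simp only [conjTranspose_apply] at this
  exact Complex.conj_eq_iff_im.mp this

lemma posDef_diag_re_pos (hA : A.PosDef) (i : Fin m) : 0 < (A i i).re := by
  have h := hA.dotProduct_mulVec_pos (x := Pi.single i 1) (by simp [Function.ne_iff])
  rw [dot_single] at h
  exact (Complex.lt_def.mp h).1

lemma posSemidef_diag_re_nonneg (hA : A.PosSemidef) (i : Fin m) : 0 ≤ (A i i).re := by
  have h := hA.dotProduct_mulVec_nonneg (Pi.single i 1)
  rw [dot_single] at h
  exact (Complex.le_def.mp h).1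

end S2

namespace S3
open Aux S2
variable {m : ℕ} {S : Matrix (Fin m) (Fin m) ℂ}

lemma det_re_pos (hS : S.PosDef) : 0 < S.det.re := (Complex.lt_def.mp hS.det_pos).1

lemma det_im_zero (hS : S.PosDef) : S.det.im = 0 := ((Complex.lt_def.mp hS.det_pos).2).symm

/-- Hadamard's inequality for positive definite complex matrices. -/
lemma hadamard (hS : S.PosDef) : S.det.re ≤ ∏ i, (S i i).re := by
  classical
  set s : Fin m → ℝ := fun i => (S i i).re with hs_def
  have hs : ∀ i, 0 < s i := fun i => posDef_diag_re_pos hS i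
  have hSii : ∀ i, S i i = (s i : ℂ) := fun i =>
    Complex.ext (by simp [hs_def]) (by simp [hs_def, herm_diag_im hS.1 i])
  set e : Fin m → ℂ := fun i => ((Real.sqrt (s i))⁻¹ : ℝ) with he_def
  set E : Matrix (Fin m) (Fin m) ℂ := diagonal e with hE_def
  have hstar_e : star e = e := funext fun i => by
    simp [he_def, Complex.star_def, Complex.conj_ofReal]
  have hEH : Eᴴ = E := by rw [hE_def, diagonal_conjTranspose, hstar_e]
  set T : Matrix (Fin m) (Fin m) ℂ := Eᴴ * S * E with hT_def
  have hT : T.PosSemidef := hS.posSemidef.conjTranspose_mul_mul_same E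
  have hTdiag : ∀ i, T i i = 1 := by
    intro i
    rw [hT_def, hEH, hE_def]
    rw [Matrix.mul_apply]
    simp only [diagonal_mul, mul_diagonal]
    rw [Finset.sum_eq_single i (fun b _ hb => by simp [diagonal_apply_ne e hb])
      (fun h => absurd (Finset.mem_univ i) h)]
    rw [diagonal_apply_eq, hSii i, he_def]
    have h1 : Real.sqrt (s i) ≠ 0 := ne_of_gt (Real.sqrt_pos.mpr (hs i))
    have h2 : ((Real.sqrt (s i) : ℂ)) ≠ 0 := by exact_mod_cast h1
    push_cast
    field_simp
    rw [← Complex.ofReal_pow, Real.sq_sqrt (hs i).le]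
  set μ : Fin m → ℝ := hT.1.eigenvalues with hμ_def
  have hμ0 : ∀ i, 0 ≤ μ i := hT.eigenvalues_nonneg
  have htrace : T.trace = ((m : ℝ) : ℂ) := by
    rw [Matrix.trace]
    simp only [diag_apply]
    rw [Finset.sum_congr rfl fun i _ => hTdiag i]
    simp
  have htrace2 : T.trace = ((∑ i, μ i : ℝ) : ℂ) := by
    conv_lhs => rw [hT.1.spectral_theorem, Unitary.conjStarAlgAut_apply]
    rw [Matrix.trace_mul_cycle]
    rw [(Matrix.mem_unitaryGroup_iff').mp hT.1.eigenvectorUnitary.2, one_mul, trace_diagonal]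
    push_cast
    simp [Function.comp]
    rfl
  have hsum : ∑ i, μ i = (m : ℝ) := by
    have h3 := htrace.symm.trans htrace2
    exact_mod_cast (Complex.ofReal_inj.mp (by exact_mod_cast h3)).symm
  have hprod_le : ∏ i, μ i ≤ 1 := by
    calc ∏ i, μ i ≤ ∏ i, Real.exp (μ i - 1) :=
          Finset.prod_le_prod (fun i _ => hμ0 i)
            (fun i _ => by linarith [Real.add_one_le_exp (μ i - 1)])
      _ = Real.exp (∑ i, (μ i - 1)) := by rw [Real.exp_sum]
      _ = 1 := by rw [Finset.sum_sub_distrib, hsum]; simp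
  have hdetT : T.det = ((∏ i, μ i : ℝ) : ℂ) := by
    rw [hT.1.det_eq_prod_eigenvalues]
    push_cast
    rfl
  set c : ℝ := ∏ i, (Real.sqrt (s i))⁻¹ with hc_def
  have hc_pos : 0 < c := Finset.prod_pos fun i _ => inv_pos.mpr (Real.sqrt_pos.mpr (hs i))
  have hdetE : E.det = (c : ℂ) := by
    rw [hE_def, det_diagonal, he_def, hc_def]
    push_cast
    rfl
  obtain ⟨d, hd, hdre⟩ : ∃ d : ℝ, S.det = (d : ℂ) ∧ S.det.re = d :=
    ⟨S.det.re, Complex.ext rfl (by simp [det_im_zero hS]), rfl⟩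
  have hdetT2 : T.det = ((c * c * d : ℝ) : ℂ) := by
    rw [hT_def, det_mul, det_mul, hEH, hdetE, hd]
    push_cast
    ring
  have hkey : c * c * d = ∏ i, μ i := by
    have h2 := hdetT2.symm.trans hdetT
    exact_mod_cast h2
  have hcc : c * c = (∏ i, s i)⁻¹ := by
    rw [hc_def, ← Finset.prod_mul_distrib, ← Finset.prod_inv_distrib]
    exact Finset.prod_congr rfl fun i _ => by
      rw [← mul_inv, Real.mul_self_sqrt (hs i).le]
  have hps : 0 < ∏ i, s i := Finset.prod_pos fun i _ => hs i
  have hd2 : d = (∏ i, s i) * ∏ i, μ i := by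
    rw [← hkey, hcc]
    field_simp
  rw [hdre, hd2]
  calc (∏ i, s i) * ∏ i, μ i ≤ (∏ i, s i) * 1 :=
        mul_le_mul_of_nonneg_left hprod_le hps.le
    _ = ∏ i, s i := by rw [mul_one]

end S3

namespace S4
open Aux S2 S3
variable {m : ℕ} {W : Matrix (Fin m) (Fin m) ℂ}

lemma det_decomp (hW : W.PosDef) (R : Matrix (Fin m) (Fin m) ℂ) :
    (1 + W * R).det = W.det * (W⁻¹ + R).det := by
  rw [← det_mul, mul_add, Matrix.mul_nonsing_inv W ((Matrix.isUnit_iff_isUnit_det W).mp hW.isUnit)]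

lemma det_re_decomp (hW : W.PosDef) {R : Matrix (Fin m) (Fin m) ℂ} (hR : R.PosSemidef) :
    (1 + W * R).det.re = W.det.re * (W⁻¹ + R).det.re := by
  have hWR : (W⁻¹ + R).PosDef := hW.inv.add_posSemidef hR
  rw [det_decomp hW R, Complex.mul_re, det_im_zero hW, det_im_zero hWR]
  ring

lemma mutualInfo_le_of_det_le (hW : W.PosDef) {R1 R2 : Matrix (Fin m) (Fin m) ℂ}
    (h1 : R1.PosSemidef) (h2 : R2.PosSemidef)
    (h : (W⁻¹ + R1).det.re ≤ (W⁻¹ + R2).det.re) :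
    mutualInfo W R1 ≤ mutualInfo W R2 := by
  have hA : (W⁻¹ + R1).PosDef := hW.inv.add_posSemidef h1
  rw [mutualInfo, mutualInfo, det_re_decomp hW h1, det_re_decomp hW h2]
  exact Real.log_le_log (mul_pos (det_re_pos hW) (det_re_pos hA))
    (mul_le_mul_of_nonneg_left h (det_re_pos hW).le)

lemma mutualInfo_lt_of_det_lt (hW : W.PosDef) {R1 R2 : Matrix (Fin m) (Fin m) ℂ}
    (h1 : R1.PosSemidef) (h2 : R2.PosSemidef)
    (h : (W⁻¹ + R1).det.re < (W⁻¹ + R2).det.re) :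
    mutualInfo W R1 < mutualInfo W R2 := by
  have hA : (W⁻¹ + R1).PosDef := hW.inv.add_posSemidef h1
  rw [mutualInfo, mutualInfo, det_re_decomp hW h1, det_re_decomp hW h2]
  exact Real.log_lt_log (mul_pos (det_re_pos hW) (det_re_pos hA))
    (mul_lt_mul_of_pos_left h (det_re_pos hW))

end S4

namespace S5
open Aux S2 S3 S4
variable {m : ℕ}

lemma ofReal_mul_re (P : ℝ) (z : ℂ) : ((P : ℂ) * z).re = P * z.re := by
  simp [Complex.mul_re]

lemma smul_one_sub_herm {P : ℝ} {A : Matrix (Fin m) (Fin m) ℂ} (hA : A.IsHermitian) :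
    ((P : ℂ) • (1 : Matrix (Fin m) (Fin m) ℂ) - A).IsHermitian := by
  have h1 : ((P : ℂ) • (1 : Matrix (Fin m) (Fin m) ℂ)).IsHermitian := by
    rw [IsHermitian, conjTranspose_smul, conjTranspose_one, Complex.star_def,
      Complex.conj_ofReal]
  exact h1.sub hA

lemma quad_smul_one_sub (P : ℝ) (A : Matrix (Fin m) (Fin m) ℂ) (x : Fin m → ℂ) :
    (star x ⬝ᵥ (((P : ℂ) • (1 : Matrix (Fin m) (Fin m) ℂ) - A) *ᵥ x)).re
      = P * (star x ⬝ᵥ x).re - (star x ⬝ᵥ (A *ᵥ x)).re := by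
  rw [sub_mulVec, dotProduct_sub, smul_mulVec, one_mulVec, dotProduct_smul]
  rw [Complex.sub_re, smul_eq_mul, ofReal_mul_re]

lemma posDef_smul_one_sub {P : ℝ} {A : Matrix (Fin m) (Fin m) ℂ} (hA : A.IsHermitian)
    (hlam : lamMax hA < P) :
    ((P : ℂ) • (1 : Matrix (Fin m) (Fin m) ℂ) - A).PosDef := by
  refine posDef_of_re (smul_one_sub_herm hA) fun x hx => ?_
  rw [quad_smul_one_sub]
  have h1 := re_le_lamMax hA x
  have h2 := dot_self_re_pos hx
  nlinarith

lemma offDiag_diag_zero (A : Matrix (Fin m) (Fin m) ℂ) (i : Fin m) : offDiag A i i = 0 := by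
  simp [offDiag]

lemma offDiag_apply_ne (A : Matrix (Fin m) (Fin m) ℂ) {i j : Fin m} (h : i ≠ j) :
    offDiag A i j = A i j := by
  simp [offDiag, h]

lemma sufficiency (hm : 1 ≤ m) {W : Matrix (Fin m) (Fin m) ℂ} (hW : W.PosDef)
    {P PT : ℝ} (hP : 0 < P)
    (hD : (offDiag (W⁻¹)).IsHermitian) (hmP : (m : ℝ) * P ≤ PT) (hlam : lamMax hD < P) :
    ((P : ℂ) • (1 : Matrix (Fin m) (Fin m) ℂ) - offDiag W⁻¹).PosDef ∧
      (P : ℂ) • (1 : Matrix (Fin m) (Fin m) ℂ) - offDiag W⁻¹ ∈ jointSet m PT P ∧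
      ∀ R ∈ jointSet m PT P,
        mutualInfo W R ≤ mutualInfo W ((P : ℂ) • (1 : Matrix (Fin m) (Fin m) ℂ) - offDiag W⁻¹) := by
  classical
  set A := offDiag (W⁻¹) with hA_def
  set M := (P : ℂ) • (1 : Matrix (Fin m) (Fin m) ℂ) - A with hM_def
  have hMpd : M.PosDef := posDef_smul_one_sub hD hlam
  have hWinv : (W⁻¹).PosDef := hW.inv
  have hMdiag : ∀ i, M i i = (P : ℂ) := by
    intro i
    rw [hM_def]
    simp [Matrix.sub_apply, Matrix.smul_apply, Matrix.one_apply_eq, hA_def, offDiag_diag_zero]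
  have hMmem : M ∈ jointSet m PT P := by
    refine ⟨hMpd.posSemidef, ?_, fun i => by rw [hMdiag i]; simp⟩
    have htr : M.trace = (P : ℂ) * m := by
      rw [Matrix.trace]
      simp only [diag_apply]
      rw [Finset.sum_congr rfl fun i _ => hMdiag i]
      simp [mul_comm]
    rw [htr]
    have : ((P : ℂ) * m).re = (m : ℝ) * P := by simp [Complex.mul_re]; ring
    rw [this]
    exact hmP
  refine ⟨hMpd, hMmem, fun R hR => ?_⟩
  obtain ⟨hRpsd, hRtr, hRdiag⟩ := hR
  apply mutualInfo_le_of_det_le hW hRpsd hMpd.posSemidef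
  -- compute det (W⁻¹ + M)
  have hdiagM : W⁻¹ + M = diagonal (fun i => W⁻¹ i i + (P : ℂ)) := by
    ext i j
    by_cases h : i = j
    · subst h
      simp [hM_def, Matrix.sub_apply, Matrix.smul_apply, Matrix.one_apply_eq,
        hA_def, offDiag_diag_zero, diagonal_apply_eq]
    · rw [diagonal_apply_ne _ h]
      simp [hM_def, Matrix.sub_apply, Matrix.smul_apply, Matrix.one_apply_ne h,
        hA_def, offDiag_apply_ne _ h]
  set w : Fin m → ℝ := fun i => (W⁻¹ i i).re with hw_def
  have hwpos : ∀ i, 0 < w i := fun i => posDef_diag_re_pos hWinv i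
  have hWii : ∀ i, W⁻¹ i i = (w i : ℂ) := fun i =>
    Complex.ext (by simp [hw_def]) (by simp [hw_def, herm_diag_im hWinv.1 i])
  have hdetM : (W⁻¹ + M).det.re = ∏ i, (w i + P) := by
    rw [hdiagM, det_diagonal]
    rw [Finset.prod_congr rfl fun i _ => by rw [hWii i]]
    rw [show (∏ i, ((w i : ℂ) + (P : ℂ))) = ((∏ i, (w i + P) : ℝ) : ℂ) by push_cast; rfl]
    rw [Complex.ofReal_re]
  rw [hdetM]
  have hWR : (W⁻¹ + R).PosDef := hWinv.add_posSemidef hRpsd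
  calc (W⁻¹ + R).det.re ≤ ∏ i, ((W⁻¹ + R) i i).re := hadamard hWR
    _ ≤ ∏ i, (w i + P) := by
        apply Finset.prod_le_prod
        · intro i _
          exact (posDef_diag_re_pos hWR i).le
        · intro i _
          have : ((W⁻¹ + R) i i).re = w i + (R i i).re := by
            simp [Matrix.add_apply, hw_def]
          rw [this]
          exact add_le_add_right (hRdiag i) _

end S5

namespace S6
open Aux S2 S3 S4 S5
variable {m : ℕ}

lemma herm_real_smul {Δ : Matrix (Fin m) (Fin m) ℂ} (hΔ : Δ.IsHermitian) (t : ℝ) :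
    ((t : ℂ) • Δ).IsHermitian := by
  rw [IsHermitian, conjTranspose_smul, Complex.star_def, Complex.conj_ofReal, hΔ.eq]

lemma trace_mul_std (B : Matrix (Fin m) (Fin m) ℂ) (i j : Fin m) (c : ℂ) :
    (B * Matrix.single i j c).trace = B j i * c := by
  classical
  rw [Matrix.trace]
  simp only [diag_apply, Matrix.mul_apply, Matrix.single]
  rw [Finset.sum_comm]
  rw [Finset.sum_eq_single i]
  · rw [Finset.sum_eq_single j]
    · simp
    · intro k _ hk; simp [Ne.symm hk]
    · intro h; exact absurd (Finset.mem_univ j) h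
  · intro l _ hl
    simp [Ne.symm hl, hl]
  · intro h; exact absurd (Finset.mem_univ i) h

lemma std_conjTranspose (i j : Fin m) (c : ℂ) :
    (Matrix.single i j c)ᴴ = Matrix.single j i (star c) := by
  ext k l
  simp only [conjTranspose_apply, Matrix.single, Matrix.of_apply]
  rw [apply_ite star, star_zero]
  congr 1
  simp [and_comm]

lemma abs_quad_le {Δ : Matrix (Fin m) (Fin m) ℂ} (hΔ : Δ.IsHermitian) (x : Fin m → ℂ) :
    |(star x ⬝ᵥ (Δ *ᵥ x)).re| ≤ (|lamMax hΔ| + |lamMin hΔ|) * (star x ⬝ᵥ x).re := by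
  have h1 := re_le_lamMax hΔ x
  have h2 := lamMin_le_re hΔ x
  have h3 := dot_self_re_nonneg x
  rw [abs_le]
  constructor
  · nlinarith [abs_nonneg (lamMax hΔ), abs_nonneg (lamMin hΔ), neg_abs_le (lamMin hΔ)]
  · nlinarith [abs_nonneg (lamMax hΔ), abs_nonneg (lamMin hΔ), le_abs_self (lamMax hΔ)]

lemma psd_perturb [Nonempty (Fin m)] {R Δ : Matrix (Fin m) (Fin m) ℂ}
    (hR : R.PosDef) (hΔ : Δ.IsHermitian) :
    ∃ ε > 0, ∀ t : ℝ, |t| ≤ ε → (R + (t : ℂ) • Δ).PosSemidef := by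
  set c := lamMin hR.1 with hc
  have hcpos : 0 < c := lamMin_pos hR
  set C := |lamMax hΔ| + |lamMin hΔ| + 1 with hC
  have hCpos : 0 < C := by positivity
  refine ⟨c / C, div_pos hcpos hCpos, fun t ht => ?_⟩
  refine posSemidef_of_re (hR.1.add (herm_real_smul hΔ t)) fun x => ?_
  rw [add_mulVec, dotProduct_add, Complex.add_re, smul_mulVec, dotProduct_smul,
    smul_eq_mul, ofReal_mul_re]
  have h1 := lamMin_le_re hR.1 x
  have h2 := abs_quad_le hΔ x
  have h3 := dot_self_re_nonneg x
  have h4 : |t * (star x ⬝ᵥ (Δ *ᵥ x)).re| ≤ (c / C) * ((|lamMax hΔ| + |lamMin hΔ|) * (star x ⬝ᵥ x).re) := by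
    rw [abs_mul]
    apply mul_le_mul ht h2 (abs_nonneg _) (div_pos hcpos hCpos).le
  have h5 : (c / C) * ((|lamMax hΔ| + |lamMin hΔ|) * (star x ⬝ᵥ x).re) ≤ c * (star x ⬝ᵥ x).re := by
    rw [div_mul_eq_mul_div, div_le_iff₀ hCpos, hC]
    nlinarith [mul_nonneg hcpos.le h3, mul_nonneg (mul_nonneg hcpos.le h3)
      (add_nonneg (abs_nonneg (lamMax hΔ)) (abs_nonneg (lamMin hΔ)))]
  have h6 := neg_abs_le (t * (star x ⬝ᵥ (Δ *ᵥ x)).re)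
  linarith

end S6

namespace S7
open Aux S2 S3 S4 S5 S6 Polynomial
variable {m : ℕ}

lemma maximizer_inv_offdiag [Nonempty (Fin m)] {W : Matrix (Fin m) (Fin m) ℂ} (hW : W.PosDef)
    {P PT : ℝ} {R : Matrix (Fin m) (Fin m) ℂ} (hRpd : R.PosDef) (hRmem : R ∈ jointSet m PT P)
    (hRmax : ∀ R' ∈ jointSet m PT P, mutualInfo W R' ≤ mutualInfo W R) :
    ∀ i j, i ≠ j → (W⁻¹ + R)⁻¹ i j = 0 := by
  classical
  intro i j hij
  by_contra hz
  set S := W⁻¹ + R with hS_def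
  have hS : S.PosDef := hW.inv.add_posSemidef hRpd.posSemidef
  have hSdet : IsUnit S.det := (Matrix.isUnit_iff_isUnit_det S).mp hS.isUnit
  have hSinv : (S⁻¹).PosDef := hS.inv
  set z := S⁻¹ i j with hz_def
  set Δ := Matrix.single i j z + Matrix.single j i (star z) with hΔ_def
  have hΔherm : Δ.IsHermitian := by
    rw [IsHermitian, hΔ_def, conjTranspose_add, std_conjTranspose, std_conjTranspose, star_star,
      add_comm]
  have hΔdiag : ∀ k, Δ k k = 0 := by
    intro k
    rw [hΔ_def, Matrix.add_apply]
    have h1 : ¬(i = k ∧ j = k) := fun h => hij (h.1.trans h.2.symm)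
    have h2 : ¬(j = k ∧ i = k) := fun h => hij (h.2.trans h.1.symm)
    simp [Matrix.single, h1, h2]
  -- the linear coefficient
  set b := (S⁻¹ * Δ).trace with hb_def
  have hji : S⁻¹ j i = star z := by
    have := congrFun (congrFun hSinv.1 j) i
    simp only [conjTranspose_apply] at this
    rw [← this, hz_def]
  have hb_eq : b = ((2 * Complex.normSq z : ℝ) : ℂ) := by
    rw [hb_def, hΔ_def, mul_add, trace_add, trace_mul_std, trace_mul_std, hji]
    rw [← hz_def]
    rw [show star z * z = ((Complex.normSq z : ℝ) : ℂ) by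
      rw [Complex.star_def]; exact Complex.normSq_eq_conj_mul_self.symm]
    rw [show z * star z = ((Complex.normSq z : ℝ) : ℂ) by
      rw [mul_comm, Complex.star_def]; exact Complex.normSq_eq_conj_mul_self.symm]
    push_cast
    ring
  have hbre : 0 < b.re := by
    rw [hb_eq, Complex.ofReal_re]
    have := Complex.normSq_pos.mpr hz
    linarith
  have hbim : b.im = 0 := by rw [hb_eq, Complex.ofReal_im]
  -- determinant expansion
  set A0 := S⁻¹ * Δ with hA0_def
  set q : Polynomial ℂ := (Matrix.det (1 + (X : ℂ[X]) • A0.map C)).divX.divX with hq_def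
  have hdet : ∀ t : ℝ, (S + (t : ℂ) • Δ).det
      = S.det * (1 + b * t + q.eval (t : ℂ) * (t : ℂ) ^ 2) := by
    intro t
    have hfac : S + (t : ℂ) • Δ = S * (1 + (t : ℂ) • A0) := by
      rw [mul_add, mul_one, hA0_def, Matrix.mul_smul, ← Matrix.mul_assoc,
        Matrix.mul_nonsing_inv S hSdet, Matrix.one_mul]
    rw [hfac, det_mul, Matrix.det_one_add_smul ((t : ℂ)) A0, ← hq_def, ← hb_def]
  obtain ⟨d, hd, hdpos⟩ : ∃ d : ℝ, S.det = (d : ℂ) ∧ 0 < d :=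
    ⟨S.det.re, Complex.ext rfl (by simp [det_im_zero hS]), det_re_pos hS⟩
  have hg : ∀ t : ℝ, (S + (t : ℂ) • Δ).det.re
      = d * (1 + b.re * t + (q.eval ((t : ℝ) : ℂ)).re * t ^ 2) := by
    intro t
    rw [hdet t, hd, ofReal_mul_re]
    congr 1
    simp [Complex.add_re, Complex.mul_re, hbim, pow_two]
  -- continuity
  set ψ : ℝ → ℝ := fun t => b.re + t * (q.eval ((t : ℝ) : ℂ)).re with hψ_def
  have hψcont : Continuous ψ := by
    apply Continuous.add continuous_const
    exact continuous_id.mul (Complex.continuous_re.comp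
      (q.continuous.comp Complex.continuous_ofReal))
  have hψ0 : 0 < ψ 0 := by simpa [hψ_def] using hbre
  have hev : ∀ᶠ t in nhds (0 : ℝ), 0 < ψ t :=
    (hψcont.continuousAt (x := 0)).eventually (eventually_gt_nhds hψ0)
  obtain ⟨δ, hδpos, hδ⟩ := Metric.eventually_nhds_iff.mp hev
  obtain ⟨ε, hεpos, hε⟩ := psd_perturb hRpd hΔherm
  set t0 := min (δ / 2) ε with ht0_def
  have ht0pos : 0 < t0 := lt_min (by linarith) hεpos
  have ht0abs : |t0| = t0 := abs_of_pos ht0pos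
  have ht0δ : |t0 - 0| < δ := by
    rw [sub_zero, ht0abs]
    calc t0 ≤ δ / 2 := min_le_left _ _
      _ < δ := by linarith
  have hψt0 : 0 < ψ t0 := hδ (by rwa [Real.dist_eq])
  -- the perturbed matrix
  set R' := R + (t0 : ℂ) • Δ with hR'_def
  have hR'psd : R'.PosSemidef := hε t0 (by rw [ht0abs]; exact min_le_right _ _)
  have hR'mem : R' ∈ jointSet m PT P := by
    refine ⟨hR'psd, ?_, ?_⟩
    · have : R'.trace = R.trace := by
        rw [hR'_def, trace_add, trace_smul, show Δ.trace = 0 by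
          rw [Matrix.trace]
          exact Finset.sum_eq_zero fun k _ => hΔdiag k]
        simp
      rw [this]
      exact hRmem.2.1
    · intro k
      have : R' k k = R k k := by
        rw [hR'_def, Matrix.add_apply, Matrix.smul_apply, hΔdiag k, smul_zero, add_zero]
      rw [this]
      exact hRmem.2.2 k
  -- contradiction with maximality
  have hdetlt : (W⁻¹ + R).det.re < (W⁻¹ + R').det.re := by
    have h1 : W⁻¹ + R' = S + (t0 : ℂ) • Δ := by rw [hR'_def, hS_def, add_assoc]
    have h2 : (W⁻¹ + R).det.re = d := by rw [← hS_def, hd, Complex.ofReal_re]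
    rw [h1, h2, hg t0]
    have hexp : 1 + b.re * t0 + (q.eval ((t0 : ℝ) : ℂ)).re * t0 ^ 2 = 1 + t0 * ψ t0 := by
      rw [hψ_def]
      ring
    rw [hexp]
    nlinarith [mul_pos (mul_pos hdpos ht0pos) hψt0]
  exact absurd (hRmax R' hR'mem)
    (not_le.mpr (mutualInfo_lt_of_det_lt hW hRpd.posSemidef hR'psd hdetlt))

end S7

namespace S8
open Aux S2 S3 S4 S5 S6 S7
variable {m : ℕ}

lemma necessity [Nonempty (Fin m)] {W : Matrix (Fin m) (Fin m) ℂ} (hW : W.PosDef)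
    {P PT : ℝ} (hD : (offDiag (W⁻¹)).IsHermitian)
    (hex : ∃ R, R.PosDef ∧ R ∈ jointSet m PT P ∧
        ∀ R' ∈ jointSet m PT P, mutualInfo W R' ≤ mutualInfo W R) :
    lamMax hD < P ∧ ((P : ℂ) • (1 : Matrix (Fin m) (Fin m) ℂ) - offDiag W⁻¹).PosDef := by
  classical
  obtain ⟨R, hRpd, hRmem, hRmax⟩ := hex
  have hclaim := maximizer_inv_offdiag hW hRpd hRmem hRmax
  set S := W⁻¹ + R with hS_def
  have hS : S.PosDef := hW.inv.add_posSemidef hRpd.posSemidef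
  have hSdet : IsUnit S.det := (Matrix.isUnit_iff_isUnit_det S).mp hS.isUnit
  have hSinvdiag : S⁻¹ = diagonal (fun k => S⁻¹ k k) := by
    ext k l
    by_cases h : k = l
    · subst h; rw [diagonal_apply_eq]
    · rw [diagonal_apply_ne _ h]
      exact hclaim k l h
  have hSdiag : ∀ k l, k ≠ l → S k l = 0 := by
    intro k l h
    conv_lhs => rw [← Matrix.nonsing_inv_nonsing_inv S hSdet, hSinvdiag, Matrix.inv_diagonal]
    exact diagonal_apply_ne _ h
  have hoff : ∀ k l, k ≠ l → W⁻¹ k l = - R k l := by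
    intro k l h
    have h0 : W⁻¹ k l + R k l = 0 := hSdiag k l h
    linear_combination h0
  -- M = diagonal + R
  set M := (P : ℂ) • (1 : Matrix (Fin m) (Fin m) ℂ) - offDiag W⁻¹ with hM_def
  have hMeq : M = diagonal (fun k => (P : ℂ) - R k k) + R := by
    ext k l
    by_cases h : k = l
    · subst h
      simp [hM_def, Matrix.sub_apply, Matrix.add_apply, Matrix.smul_apply, Matrix.one_apply_eq,
        offDiag_diag_zero, diagonal_apply_eq]
    · rw [hM_def, Matrix.sub_apply, Matrix.add_apply, diagonal_apply_ne _ h,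
        offDiag_apply_ne _ h, hoff k l h]
      simp [Matrix.smul_apply, Matrix.one_apply_ne h]
  have hdiagPSD : (diagonal (fun k => (P : ℂ) - R k k)).PosSemidef := by
    apply Matrix.PosSemidef.diagonal
    intro k
    have him : (R k k).im = 0 := herm_diag_im hRpd.1 k
    have hre : (R k k).re ≤ P := hRmem.2.2 k
    rw [Complex.le_def]
    constructor
    · simp [Complex.sub_re]; linarith
    · simp [Complex.sub_im, him]
  have hMpd : M.PosDef := by
    rw [hMeq]
    exact Matrix.PosDef.posSemidef_add hdiagPSD hRpd
  refine ⟨?_, hMpd⟩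
  -- largest eigenvalue bound
  obtain ⟨j, hj⟩ := exists_eq_lamMax hD
  set v : Fin m → ℂ := ⇑(hD.eigenvectorBasis j) with hv_def
  have hvnz : v ≠ 0 := by
    intro h
    have h1 := hD.eigenvectorBasis.orthonormal.1 j
    have h2 : (hD.eigenvectorBasis j : EuclideanSpace ℂ (Fin m)) = 0 := by
      ext k
      exact congrFun h k
    rw [h2, norm_zero] at h1
    exact zero_ne_one h1
  have hmv : (offDiag W⁻¹) *ᵥ v = ((hD.eigenvalues j : ℂ)) • v := by
    rw [hv_def, hD.mulVec_eigenvectorBasis]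
    funext k
    simp [Complex.real_smul]
  have hquad := hMpd.dotProduct_mulVec_pos hvnz
  rw [hM_def] at hquad
  rw [sub_mulVec, smul_mulVec, one_mulVec, hmv, dotProduct_sub, dotProduct_smul,
    dotProduct_smul] at hquad
  have hNv : 0 < (star v ⬝ᵥ v).re := dot_self_re_pos hvnz
  have him : (star v ⬝ᵥ v).im = 0 := dot_self_im v
  have hre := (Complex.lt_def.mp hquad).1
  simp only [Complex.zero_re, Complex.sub_re, smul_eq_mul, Complex.mul_re, Complex.ofReal_re,
    Complex.ofReal_im, him] at hre
  rw [← hj]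
  nlinarith [hre, hNv]

end S8

/-- Necessity of `λ_max(D̄(W⁻¹)) < P` (equivalently, positive definiteness of
`P·I − D̄(W⁻¹)`) for a positive definite maximizer to exist, and its sufficiency
when `m·P ≤ P_T`, in which case `R* = P·I − D̄(W⁻¹)` is a maximizer. -/
theorem stmt8 (m : ℕ) (hm : 1 ≤ m) (W : Matrix (Fin m) (Fin m) ℂ) (hW : W.PosDef)
    (P PT : ℝ) (hP : 0 < P) (hPT : 0 < PT)
    (hD : (offDiag (W⁻¹)).IsHermitian) :
    ((∃ R, R.PosDef ∧ R ∈ jointSet m PT P ∧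
        ∀ R' ∈ jointSet m PT P, mutualInfo W R' ≤ mutualInfo W R) →
      lamMax hD < P ∧ ((P : ℂ) • (1 : Matrix (Fin m) (Fin m) ℂ) - offDiag W⁻¹).PosDef) ∧
    ((m : ℝ) * P ≤ PT → lamMax hD < P →
      ((P : ℂ) • (1 : Matrix (Fin m) (Fin m) ℂ) - offDiag W⁻¹).PosDef ∧
      (P : ℂ) • (1 : Matrix (Fin m) (Fin m) ℂ) - offDiag W⁻¹ ∈ jointSet m PT P ∧
      ∀ R ∈ jointSet m PT P,
        mutualInfo W R ≤ mutualInfo W ((P : ℂ) • (1 : Matrix (Fin m) (Fin m) ℂ) - offDiag W⁻¹)) := by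
  haveI : Nonempty (Fin m) := ⟨⟨0, hm⟩⟩
  exact ⟨fun hex => S8.necessity hW hD hex,
    fun hmP hlam => S5.sufficiency hm hW hP hD hmP hlam⟩
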